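/- Let μ be an absolutely α-friendly compactly supported measure on ℝ^k, S ⊆ ℝ^{k−1} a K₁-quasiconvex set, f : S → ℝ with ‖f''‖_S ≤ K₂/ρ, Γ the graph of f, and β < α. Then there is C > 0 (depending on K₁, K₂, μ, β) such that for every ball B = B(x,ρ) with x ∈ supp(μ) and every ε > 0, μ(B ∩ Γ^{(ερ)}) ≤ C·ε^β·μ(B), where Γ^{(r)} is the closed r-neighborhood of Γ. -/

import Mathlib

open MeasureTheory Metric Set
open scoped RealInnerProductSpace

variable {m : ℕ}

/-- The (topological) support of a measure. -/
def msupp {X : Type*} [MetricSpace X] [MeasurableSpace X] (μ : Measure X) : Set X :=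
  {x | ∀ ρ > 0, 0 < μ (Metric.ball x ρ)}

/-- `μ` is absolutely `α`-decaying with constant `C` at scales `≤ ρ₀`. -/
def AbsDecaying (α C ρ₀ : ℝ) (μ : Measure (EuclideanSpace ℝ (Fin (m + 1)))) : Prop :=
  ∀ x ∈ msupp μ, ∀ ρ : ℝ, 0 < ρ → ρ ≤ ρ₀ →
    ∀ (w : EuclideanSpace ℝ (Fin (m + 1))) (t : ℝ), w ≠ 0 → ∀ ε : ℝ, 0 < ε →
      μ (closedBall x ρ ∩ cthickening (ε * ρ) {y | ⟪y, w⟫ = t}) ≤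
        ENNReal.ofReal (C * ε ^ α) * μ (closedBall x ρ)

/-- `μ` is Federer (doubling) with constant `C` at scales `≤ ρ₀`. -/
def Federer (C ρ₀ : ℝ) (μ : Measure (EuclideanSpace ℝ (Fin (m + 1)))) : Prop :=
  ∀ x ∈ msupp μ, ∀ ρ : ℝ, 0 < ρ → ρ ≤ ρ₀ →
    μ (closedBall x (2 * ρ)) ≤ ENNReal.ofReal C * μ (closedBall x ρ)

/-- `S` is `K`-quasiconvex. -/
def IsQuasiconvex (K : ℝ) (S : Set (EuclideanSpace ℝ (Fin m))) : Prop :=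
  ∀ x ∈ S, ∀ y ∈ S, ∃ γ : ℝ → EuclideanSpace ℝ (Fin m),
    ContinuousOn γ (Icc 0 1) ∧ γ 0 = x ∧ γ 1 = y ∧ (∀ t ∈ Icc (0:ℝ) 1, γ t ∈ S) ∧
      eVariationOn γ (Icc 0 1) ≤ ENNReal.ofReal (K * ‖y - x‖)

/-- The graph of `f : S → ℝ`, as a subset of `ℝ^{m+1} = ℝ^m × ℝ`. -/
def graphOf (S : Set (EuclideanSpace ℝ (Fin m))) (f : EuclideanSpace ℝ (Fin m) → ℝ) :
    Set (EuclideanSpace ℝ (Fin (m + 1))) :=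
  {p | ∃ z ∈ S, p = WithLp.toLp 2 (Fin.snoc (α := fun _ => ℝ) (WithLp.ofLp z) (f z))}

section Chain
variable {E F : Type*} [NormedAddCommGroup E] [NormedSpace ℝ E]
  [NormedAddCommGroup F] [NormedSpace ℝ F]

/-- Fundamental estimate along a bounded-variation path inside `S`. -/
lemma chain_estimate {S : Set E} {g : E → F} {g' : E → E →L[ℝ] F}
    (hg : ∀ z ∈ S, HasFDerivWithinAt g (g' z) S z)
    {γ : ℝ → E} (hγc : ContinuousOn γ (Icc 0 1)) (hγS : ∀ t ∈ Icc (0:ℝ) 1, γ t ∈ S)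
    {V : ℝ} (hV : 0 ≤ V) (hvar : eVariationOn γ (Icc 0 1) ≤ ENNReal.ofReal V)
    (A : E →L[ℝ] F) {D : ℝ} (hD : ∀ t ∈ Icc (0:ℝ) 1, ‖g' (γ t) - A‖ ≤ D) :
    ‖g (γ 1) - g (γ 0) - A (γ 1 - γ 0)‖ ≤ D * V := by
  have hD0 : 0 ≤ D := le_trans (norm_nonneg _) (hD 0 ⟨le_rfl, zero_le_one⟩)
  set v : ℝ → ℝ := fun b => (eVariationOn γ (Icc 0 b)).toReal with hv
  have hfin : ∀ b : ℝ, b ≤ 1 → eVariationOn γ (Icc 0 b) ≠ ⊤ := by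
    intro b hb
    exact ne_top_of_le_ne_top (by exact ENNReal.ofReal_ne_top)
      (le_trans (eVariationOn.mono γ (Icc_subset_Icc le_rfl hb)) hvar)
  have vmono : ∀ b c : ℝ, b ≤ c → c ≤ 1 → v b ≤ v c := by
    intro b c hbc hc1
    exact ENNReal.toReal_mono (hfin c hc1) (eVariationOn.mono γ (Icc_subset_Icc le_rfl hbc))
  have v0 : v 0 = 0 := by
    have : eVariationOn γ (Icc (0:ℝ) 0) = 0 :=
      eVariationOn.subsingleton γ (by simp [Set.Icc_self])
    simp [hv, this]
  have vV : ∀ b : ℝ, b ≤ 1 → v b ≤ V := by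
    intro b hb
    have := le_trans (eVariationOn.mono γ (Icc_subset_Icc le_rfl hb)) hvar
    calc v b ≤ (ENNReal.ofReal V).toReal := ENNReal.toReal_mono ENNReal.ofReal_ne_top this
    _ = V := ENNReal.toReal_ofReal hV
  have vdist : ∀ c b : ℝ, 0 ≤ c → c ≤ b → b ≤ 1 → dist (γ b) (γ c) ≤ v b - v c := by
    intro c b h0c hcb hb1
    have hsplit := eVariationOn.Icc_add_Icc (s := Icc (0:ℝ) 1) γ h0c hcb
      ⟨h0c, le_trans hcb hb1⟩
    rw [Icc_inter_Icc, Icc_inter_Icc, Icc_inter_Icc] at hsplit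
    simp only [sup_of_le_left, le_refl, sup_idem, min_eq_right hb1,
      min_eq_right (le_trans hcb hb1), min_eq_right (hcb.trans hb1)] at hsplit
    rw [show max (0:ℝ) c = c from max_eq_right h0c] at hsplit
    have hed : edist (γ c) (γ b) ≤ eVariationOn γ (Icc c b) :=
      eVariationOn.edist_le γ ⟨le_rfl, hcb⟩ ⟨hcb, le_rfl⟩
    have hfb := hfin b hb1
    have hfc : eVariationOn γ (Icc 0 c) ≠ ⊤ := hfin c (hcb.trans hb1)
    have hfcb : eVariationOn γ (Icc c b) ≠ ⊤ := by
      intro h; rw [h] at hsplit; simp at hsplit; exact hfb hsplit.symm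
    have : (eVariationOn γ (Icc 0 c)).toReal + (eVariationOn γ (Icc c b)).toReal
        = (eVariationOn γ (Icc 0 b)).toReal := by
      rw [← ENNReal.toReal_add hfc hfcb, hsplit]
    have hd : dist (γ b) (γ c) ≤ (eVariationOn γ (Icc c b)).toReal := by
      rw [dist_comm, dist_edist]
      exact ENNReal.toReal_mono hfcb hed
    simp only [hv]; linarith
  -- main argument: for every η > 0, the estimate with D+η holds
  have main : ∀ η > (0:ℝ), ‖g (γ 1) - g (γ 0) - A (γ 1 - γ 0)‖ ≤ (D + η) * v 1 := by
    intro η hη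
    set φ : ℝ → ℝ := fun b => ‖g (γ b) - g (γ 0) - A (γ b - γ 0)‖ with hφ
    have hgc : ContinuousOn g S := fun z hz => (hg z hz).continuousWithinAt
    have hφc : ContinuousOn φ (Icc 0 1) := by
      apply ContinuousOn.norm
      have h1 : ContinuousOn (fun b => g (γ b)) (Icc 0 1) :=
        hgc.comp hγc hγS
      exact (h1.sub continuousOn_const).sub
        (A.continuous.comp_continuousOn (hγc.sub continuousOn_const))
    set s : Set ℝ := {b | b ∈ Icc (0:ℝ) 1 ∧ φ b ≤ (D + η) * v b} with hs
    have h0s : (0:ℝ) ∈ s := by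
      constructor
      · exact ⟨le_rfl, zero_le_one⟩
      · simp [hφ, v0]
    have hsne : s.Nonempty := ⟨0, h0s⟩
    have hsbd : BddAbove s := ⟨1, fun b hb => hb.1.2⟩
    set c := sSup s with hc
    have hc0 : 0 ≤ c := le_csSup hsbd h0s
    have hc1 : c ≤ 1 := csSup_le hsne fun b hb => hb.1.2
    have hcI : c ∈ Icc (0:ℝ) 1 := ⟨hc0, hc1⟩
    -- c ∈ s
    have hcs : φ c ≤ (D + η) * v c := by
      refine le_of_forall_pos_le_add ?_
      intro θ hθ
      have hφcc : ContinuousWithinAt φ (Icc 0 1) c := hφc c hcI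
      rcases Metric.continuousWithinAt_iff.1 hφcc θ hθ with ⟨δ, hδ, hδp⟩
      obtain ⟨b, hbs, hbc⟩ : ∃ b ∈ s, c - δ < b := by
        rcases exists_lt_of_lt_csSup hsne (show c - δ < c by linarith) with ⟨b, hbs, hbb⟩
        exact ⟨b, hbs, hbb⟩
      have hbc' : b ≤ c := le_csSup hsbd hbs
      have hdist : dist b c < δ := by
        rw [Real.dist_eq, abs_lt]; constructor <;> linarith
      have hval := hδp hbs.1 hdist
      have habs : |φ b - φ c| < θ := by rwa [Real.dist_eq] at hval
      have hvb : v b ≤ v c := vmono b c hbc' hc1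
      have : φ c ≤ φ b + θ := by
        rcases abs_lt.1 habs with ⟨h1, h2⟩; linarith
      calc φ c ≤ φ b + θ := this
        _ ≤ (D + η) * v b + θ := by linarith [hbs.2]
        _ ≤ (D + η) * v c + θ := by nlinarith
    -- c = 1
    rcases eq_or_lt_of_le hc1 with hceq | hclt
    · have : φ 1 ≤ (D + η) * v 1 := hceq ▸ hcs
      exact this
    · exfalso
      -- derivative estimate at γ c
      have hder := hg (γ c) (hγS c hcI)
      have hev := hder.isLittleO.def hη
      rw [Filter.eventually_iff, mem_nhdsWithin] at hev
      obtain ⟨U, hUo, hUc, hUsub⟩ := hev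
      rcases Metric.isOpen_iff.1 hUo (γ c) hUc with ⟨δ₁, hδ₁, hball⟩
      -- continuity of γ at c
      have hγcc : ContinuousWithinAt γ (Icc 0 1) c := hγc c hcI
      rcases Metric.continuousWithinAt_iff.1 hγcc δ₁ hδ₁ with ⟨δ₂, hδ₂, hγδ⟩
      set b := min 1 (c + δ₂ / 2) with hb
      have hbc : c < b := by
        simp only [hb, lt_min_iff]; exact ⟨hclt, by linarith⟩
      have hbI : b ∈ Icc (0:ℝ) 1 := ⟨le_trans hc0 hbc.le, min_le_left _ _⟩
      have hbdist : dist b c < δ₂ := by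
        rw [Real.dist_eq, abs_lt]
        have : b ≤ c + δ₂ / 2 := min_le_right _ _
        constructor <;> [linarith; linarith]
      have hγbS : γ b ∈ S := hγS b hbI
      have hγbU : γ b ∈ U := hball (hγδ hbI hbdist)
      have hest : ‖g (γ b) - g (γ c) - (g' (γ c)) (γ b - γ c)‖ ≤ η * ‖γ b - γ c‖ := by
        have := hUsub ⟨hγbU, hγbS⟩
        simpa using this
      have htri : φ b ≤ φ c + ‖g (γ b) - g (γ c) - A (γ b - γ c)‖ := by
        have : g (γ b) - g (γ 0) - A (γ b - γ 0)
            = (g (γ c) - g (γ 0) - A (γ c - γ 0)) + (g (γ b) - g (γ c) - A (γ b - γ c)) := by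
          simp only [map_sub]; abel
        rw [hφ]; simp only []; rw [this]
        exact norm_add_le _ _
      have h2 : ‖g (γ b) - g (γ c) - A (γ b - γ c)‖
          ≤ η * ‖γ b - γ c‖ + D * ‖γ b - γ c‖ := by
        have : g (γ b) - g (γ c) - A (γ b - γ c)
            = (g (γ b) - g (γ c) - (g' (γ c)) (γ b - γ c)) + ((g' (γ c) - A) (γ b - γ c)) := by
          simp only [ContinuousLinearMap.sub_apply]; abel
        rw [this]
        refine le_trans (norm_add_le _ _) (add_le_add hest ?_)
        exact le_trans ((g' (γ c) - A).le_opNorm _)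
          (mul_le_mul_of_nonneg_right (hD c hcI) (norm_nonneg _))
      have hnv : ‖γ b - γ c‖ ≤ v b - v c := by
        rw [← dist_eq_norm]; exact vdist c b hc0 hbc.le hbI.2
      have hφb : φ b ≤ (D + η) * v b := by
        have hvbc : 0 ≤ v b - v c := by linarith [vmono c b hbc.le hbI.2]
        calc φ b ≤ φ c + (η * ‖γ b - γ c‖ + D * ‖γ b - γ c‖) := by linarith
          _ ≤ (D + η) * v c + (D + η) * ‖γ b - γ c‖ := by nlinarith
          _ ≤ (D + η) * v c + (D + η) * (v b - v c) := by nlinarith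
          _ = (D + η) * v b := by ring
      have : b ∈ s := ⟨hbI, hφb⟩
      exact absurd (le_csSup hsbd this) (not_le.2 hbc)
  -- conclude
  refine le_of_forall_pos_le_add ?_
  intro θ hθ
  have hηpos : (0:ℝ) < θ / (V + 1) := by positivity
  have h := main (θ / (V + 1)) hηpos
  have hv1 : v 1 ≤ V := vV 1 le_rfl
  have hv1' : 0 ≤ v 1 := by
    have := vmono 0 1 zero_le_one le_rfl; rw [v0] at this; linarith
  calc ‖g (γ 1) - g (γ 0) - A (γ 1 - γ 0)‖ ≤ (D + θ / (V + 1)) * v 1 := h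
    _ = D * v 1 + (θ / (V + 1)) * v 1 := by ring
    _ ≤ D * V + θ := by
        have h1 : D * v 1 ≤ D * V := by nlinarith
        have h2 : (θ / (V + 1)) * v 1 ≤ θ := by
          rw [div_mul_eq_mul_div, div_le_iff₀ (by linarith)]
          nlinarith
        linarith
end Chain

section Taylor
variable {E : Type*} [NormedAddCommGroup E] [NormedSpace ℝ E]

lemma taylor_quasiconvex {K₁ : ℝ} {S : Set E} {f : E → ℝ} {f' : E → (E →L[ℝ] ℝ)}
    {f'' : E → (E →L[ℝ] E →L[ℝ] ℝ)}
    (hQ : ∀ x ∈ S, ∀ y ∈ S, ∃ γ : ℝ → E,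
      ContinuousOn γ (Icc 0 1) ∧ γ 0 = x ∧ γ 1 = y ∧ (∀ t ∈ Icc (0:ℝ) 1, γ t ∈ S) ∧
        eVariationOn γ (Icc 0 1) ≤ ENNReal.ofReal (K₁ * ‖y - x‖))
    (hf : ∀ z ∈ S, HasFDerivWithinAt f (f' z) S z)
    (hf' : ∀ z ∈ S, HasFDerivWithinAt f' (f'' z) S z)
    {M : ℝ} (hM : ∀ z ∈ S, ‖f'' z‖ ≤ M) (hK₁ : 0 ≤ K₁)
    {z z' : E} (hz : z ∈ S) (hz' : z' ∈ S) :
    |f z' - f z - f' z (z' - z)| ≤ M * K₁^2 * ‖z' - z‖^2 := by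
  obtain ⟨γ, hγc, hγ0, hγ1, hγS, hγvar⟩ := hQ z hz z' hz'
  set V : ℝ := K₁ * ‖z' - z‖ with hV
  have hV0 : 0 ≤ V := mul_nonneg hK₁ (norm_nonneg _)
  have hM0 : 0 ≤ M := (norm_nonneg (f'' z)).trans (hM z hz)
  -- Lipschitz bound for f' along the path
  have hLip : ∀ b ∈ Icc (0:ℝ) 1, ‖f' (γ b) - f' z‖ ≤ M * V := by
    intro b hb
    set φb : ℝ → ℝ := fun s => b * s with hφb
    have hmaps : MapsTo φb (Icc 0 1) (Icc (0:ℝ) 1) := by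
      intro s hs
      exact ⟨mul_nonneg hb.1 hs.1, mul_le_one₀ hb.2 hs.1 hs.2⟩
    have hcont : ContinuousOn (γ ∘ φb) (Icc 0 1) :=
      hγc.comp ((continuous_const.mul continuous_id).continuousOn) hmaps
    have hSb : ∀ t ∈ Icc (0:ℝ) 1, (γ ∘ φb) t ∈ S := fun t ht => hγS _ (hmaps ht)
    have hvarb : eVariationOn (γ ∘ φb) (Icc 0 1) ≤ ENNReal.ofReal V := by
      refine le_trans (eVariationOn.comp_le_of_monotoneOn γ φb ?_ hmaps) hγvar
      exact fun s hs t ht hst => mul_le_mul_of_nonneg_left hst hb.1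
    have := chain_estimate hf' hcont hSb hV0 hvarb 0 (D := M)
      (fun t ht => by simpa using hM _ (hSb t ht))
    simp only [Function.comp_apply, hφb, mul_one, mul_zero, hγ0,
      ContinuousLinearMap.zero_apply, sub_zero] at this
    exact this
  have := chain_estimate hf hγc hγS hV0 hγvar (f' z) (D := M * V)
    (fun t ht => hLip t ht)
  rw [hγ0, hγ1] at this
  calc |f z' - f z - f' z (z' - z)| ≤ M * V * V := this
    _ = M * K₁^2 * ‖z' - z‖^2 := by rw [hV]; ring
end Taylor

section Snoc
variable {m : ℕ}

/-- `Fin.snoc` as a map into Euclidean space. -/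
def esnoc (a : EuclideanSpace ℝ (Fin m)) (b : ℝ) : EuclideanSpace ℝ (Fin (m+1)) :=
  WithLp.toLp 2 (Fin.snoc (α := fun _ => ℝ) (WithLp.ofLp a) b)

lemma snoc_sub_snoc (a c : EuclideanSpace ℝ (Fin m)) (b d : ℝ) :
    esnoc a b - esnoc c d = esnoc (a - c) (b - d) := by
  ext i
  show (esnoc a b) i - (esnoc c d) i = _
  refine Fin.lastCases ?_ ?_ i
  · simp [esnoc, Fin.snoc_last]
  · intro j; simp [esnoc, Fin.snoc_castSucc]

lemma inner_snoc_snoc (a c : EuclideanSpace ℝ (Fin m)) (b d : ℝ) :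
    ⟪esnoc a b, esnoc c d⟫ = ⟪a, c⟫ + b * d := by
  simp [esnoc, PiLp.inner_apply, RCLike.inner_apply, Fin.sum_univ_castSucc, mul_comm]

lemma norm_snoc_sq (a : EuclideanSpace ℝ (Fin m)) (b : ℝ) :
    ‖esnoc a b‖^2 = ‖a‖^2 + b^2 := by
  rw [← real_inner_self_eq_norm_sq, ← real_inner_self_eq_norm_sq, inner_snoc_snoc]
  ring

lemma norm_fst_le_norm_snoc (a : EuclideanSpace ℝ (Fin m)) (b : ℝ) :
    ‖a‖ ≤ ‖esnoc a b‖ := by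
  have h := norm_snoc_sq a b
  nlinarith [norm_nonneg a, norm_nonneg (esnoc a b), sq_nonneg b]

lemma dist_to_hyperplane (w : EuclideanSpace ℝ (Fin (m+1))) (hw : 1 ≤ ‖w‖) (t : ℝ)
    (q : EuclideanSpace ℝ (Fin (m+1))) :
    ∃ y : EuclideanSpace ℝ (Fin (m+1)), ⟪y, w⟫ = t ∧ dist q y ≤ |⟪q, w⟫ - t| := by
  have hw0 : ‖w‖ ≠ 0 := by linarith
  refine ⟨q - ((⟪q, w⟫ - t)/‖w‖^2) • w, ?_, ?_⟩
  · rw [inner_sub_left, real_inner_smul_left, real_inner_self_eq_norm_sq]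
    field_simp
    ring
  · rw [dist_eq_norm, sub_sub_cancel, norm_smul, Real.norm_eq_abs, abs_div, abs_pow, abs_norm]
    rw [div_mul_eq_mul_div, pow_two, ← div_div, mul_div_assoc, div_self hw0, mul_one]
    exact div_le_of_le_mul₀ (by linarith) (abs_nonneg _) (by nlinarith [abs_nonneg (⟪q, w⟫ - t)])
end Snoc

section MeasureHelpers
variable {m : ℕ}

lemma msupp_compl_null (μ : Measure (EuclideanSpace ℝ (Fin (m+1)))) :
    μ ((msupp μ)ᶜ) = 0 := by
  set U : Set (Set (EuclideanSpace ℝ (Fin (m+1)))) := {V | IsOpen V ∧ μ V = 0} with hU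
  obtain ⟨T, hTc, hTU, hTeq⟩ :=
    TopologicalSpace.isOpen_sUnion_countable U (fun V hV => hV.1)
  have hsub : (msupp μ)ᶜ ⊆ ⋃₀ U := by
    intro x hx
    simp only [msupp, mem_compl_iff, mem_setOf_eq] at hx
    push_neg at hx
    obtain ⟨ρ, hρ, h0⟩ := hx
    have h0' : μ (ball x ρ) = 0 := le_antisymm h0 (zero_le)
    exact ⟨ball x ρ, ⟨isOpen_ball, h0'⟩, mem_ball_self hρ⟩
  have hT0 : μ (⋃₀ T) = 0 := by
    haveI := hTc.to_subtype
    rw [sUnion_eq_iUnion]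
    exact measure_iUnion_null (fun s : ↥T => (hTU s.2).2)
  exact measure_mono_null (hTeq ▸ hsub) hT0

lemma fed_eight {CF ρ₀ : ℝ} {μ : Measure (EuclideanSpace ℝ (Fin (m+1)))}
    (hFed : Federer CF ρ₀ μ) (hCF : 0 < CF) {y : EuclideanSpace ℝ (Fin (m+1))}
    (hy : y ∈ msupp μ) {s : ℝ} (hs : 0 < s) (h4 : 4*s ≤ ρ₀) :
    μ (closedBall y (8*s)) ≤ ENNReal.ofReal (CF^3) * μ (closedBall y s) := by
  have h1 := hFed y hy s hs (by linarith)
  have h2 := hFed y hy (2*s) (by linarith) (by linarith)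
  have h3 := hFed y hy (4*s) (by linarith) (by linarith)
  have e2 : (2:ℝ) * (2*s) = 4*s := by ring
  have e3 : (2:ℝ) * (4*s) = 8*s := by ring
  rw [e2] at h2; rw [e3] at h3
  calc μ (closedBall y (8*s)) ≤ ENNReal.ofReal CF * μ (closedBall y (4*s)) := h3
    _ ≤ ENNReal.ofReal CF * (ENNReal.ofReal CF * μ (closedBall y (2*s))) :=
        mul_le_mul_right h2 _
    _ ≤ ENNReal.ofReal CF * (ENNReal.ofReal CF * (ENNReal.ofReal CF * μ (closedBall y s))) :=
        mul_le_mul_right (mul_le_mul_right h1 _) _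
    _ = ENNReal.ofReal (CF^3) * μ (closedBall y s) := by
        rw [← mul_assoc, ← mul_assoc, ← ENNReal.ofReal_mul hCF.le, ← ENNReal.ofReal_mul
          (by positivity)]
        ring_nf
end MeasureHelpers

section Plane
variable {m : ℕ}

set_option maxHeartbeats 1000000 in
lemma graph_near_plane {K₁ K₂ : ℝ} (hK₁ : 0 < K₁) (hK₂ : 0 < K₂)
    {S : Set (EuclideanSpace ℝ (Fin m))} {f : EuclideanSpace ℝ (Fin m) → ℝ}
    {f' : EuclideanSpace ℝ (Fin m) → (EuclideanSpace ℝ (Fin m) →L[ℝ] ℝ)}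
    {f'' : EuclideanSpace ℝ (Fin m) →
      (EuclideanSpace ℝ (Fin m) →L[ℝ] EuclideanSpace ℝ (Fin m) →L[ℝ] ℝ)}
    (hQ : IsQuasiconvex K₁ S)
    (hf : ∀ z ∈ S, HasFDerivWithinAt f (f' z) S z)
    (hf' : ∀ z ∈ S, HasFDerivWithinAt f' (f'' z) S z)
    {ρ : ℝ} (hρ : 0 < ρ) (hM : ∀ z ∈ S, ‖f'' z‖ ≤ K₂ / ρ)
    {ε r : ℝ} (hε : 0 < ε) (hεr : ε ≤ r) (hr1 : r ≤ 1) (hr2 : r^2 ≤ ε)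
    {y : EuclideanSpace ℝ (Fin (m+1))} (hy : y ∈ cthickening (ε*ρ) (graphOf S f)) :
    ∃ (w : EuclideanSpace ℝ (Fin (m+1))) (t : ℝ), w ≠ 0 ∧
      closedBall y (5*r*ρ) ∩ cthickening (ε*ρ) (graphOf S f)
        ⊆ cthickening ((2 + 81*K₁^2*K₂)*ε*ρ) {p | ⟪p, w⟫ = t} := by
  have hε0 : (0:ℝ) < ε * ρ := by positivity
  have hr0 : (0:ℝ) < r := lt_of_lt_of_le hε hεr
  have hnear : ∀ p : EuclideanSpace ℝ (Fin (m+1)), p ∈ cthickening (ε*ρ) (graphOf S f) →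
      ∃ z ∈ S, dist p (esnoc z (f z)) < 2*(ε*ρ) := by
    intro p hp
    rw [Metric.mem_cthickening_iff] at hp
    have h2lt : ENNReal.ofReal (ε*ρ) < ENNReal.ofReal (2*(ε*ρ)) := by
      have hq : (0:ℝ) < 2*(ε*ρ) := by positivity
      exact (ENNReal.ofReal_lt_ofReal_iff hq).2 (by nlinarith [mul_pos hε hρ])
    have hlt : EMetric.infEdist p (graphOf S f) < ENNReal.ofReal (2*(ε*ρ)) :=
      lt_of_le_of_lt hp h2lt
    obtain ⟨q, hqΓ, hqd⟩ := EMetric.infEdist_lt_iff.1 hlt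
    obtain ⟨z, hzS, hzq⟩ := hqΓ
    refine ⟨z, hzS, ?_⟩
    have := edist_lt_ofReal.1 hqd
    rwa [hzq] at this
  obtain ⟨z₀, hz₀S, hz₀d⟩ := hnear y hy
  set u : EuclideanSpace ℝ (Fin m) :=
    (InnerProductSpace.toDual ℝ (EuclideanSpace ℝ (Fin m))).symm (f' z₀) with hu
  have huP : ∀ v : EuclideanSpace ℝ (Fin m), ⟪u, v⟫ = f' z₀ v := fun v =>
    InnerProductSpace.toDual_symm_apply
  set w : EuclideanSpace ℝ (Fin (m+1)) := esnoc (-u) 1 with hw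
  set t : ℝ := f z₀ - f' z₀ z₀ with ht
  have hwkey : ∀ (z' : EuclideanSpace ℝ (Fin m)) (s : ℝ),
      ⟪esnoc z' s, w⟫ = s - f' z₀ z' := by
    intro z' s
    rw [hw, inner_snoc_snoc, inner_neg_right, real_inner_comm, huP]
    ring
  have hwnorm : 1 ≤ ‖w‖ := by
    have h := norm_snoc_sq (-u) 1
    rw [← hw] at h
    nlinarith [norm_nonneg w, sq_nonneg (‖(-u : EuclideanSpace ℝ (Fin m))‖)]
  have hwne : w ≠ 0 := by
    intro h
    rw [h] at hwnorm; simp at hwnorm; linarith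
  refine ⟨w, t, hwne, ?_⟩
  rintro p ⟨hpB, hpΓ⟩
  obtain ⟨z', hz'S, hz'd⟩ := hnear p hpΓ
  -- bound ‖z' - z₀‖
  have hqq : dist (esnoc z' (f z')) (esnoc z₀ (f z₀)) ≤ 9*r*ρ := by
    have h1 : dist (esnoc z' (f z')) p < 2*(ε*ρ) := by rw [dist_comm]; exact hz'd
    have h2 : dist p y ≤ 5*r*ρ := mem_closedBall.1 hpB
    have h3 : ε * ρ ≤ r * ρ := by nlinarith
    calc dist (esnoc z' (f z')) (esnoc z₀ (f z₀))
        ≤ dist (esnoc z' (f z')) p + dist p y + dist y (esnoc z₀ (f z₀)) := dist_triangle4 _ _ _ _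
      _ ≤ 2*(ε*ρ) + 5*r*ρ + 2*(ε*ρ) := by linarith
      _ ≤ 9*r*ρ := by nlinarith
  have hzz : ‖z' - z₀‖ ≤ 9*r*ρ := by
    have := norm_fst_le_norm_snoc (z' - z₀) (f z' - f z₀)
    rw [← snoc_sub_snoc] at this
    calc ‖z' - z₀‖ ≤ ‖esnoc z' (f z') - esnoc z₀ (f z₀)‖ := this
      _ ≤ 9*r*ρ := by rw [← dist_eq_norm]; exact hqq
  -- Taylor estimate
  have hdev : |f z' - f z₀ - f' z₀ (z' - z₀)| ≤ 81*K₁^2*K₂*ε*ρ := by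
    have htay := taylor_quasiconvex hQ hf hf' hM hK₁.le hz₀S hz'S
    have hsq : ‖z' - z₀‖^2 ≤ (9*r*ρ)^2 := by
      have h9 : (0:ℝ) ≤ 9*r*ρ := by nlinarith [mul_pos hr0 hρ]
      nlinarith [norm_nonneg (z' - z₀)]
    calc |f z' - f z₀ - f' z₀ (z' - z₀)| ≤ K₂/ρ * K₁^2 * ‖z' - z₀‖^2 := htay
      _ ≤ K₂/ρ * K₁^2 * (9*r*ρ)^2 := by
          have : (0:ℝ) ≤ K₂/ρ * K₁^2 := by positivity
          nlinarith
      _ = 81*K₁^2*K₂*(r^2)*ρ := by field_simp; ring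
      _ ≤ 81*K₁^2*K₂*ε*ρ := by
          have hco : (0:ℝ) ≤ 81*K₁^2*K₂*ρ := by positivity
          have h := mul_le_mul_of_nonneg_left hr2 hco
          nlinarith [h]
  -- distance from p to the hyperplane
  obtain ⟨yq, hyqmem, hyqd⟩ := dist_to_hyperplane w hwnorm t (esnoc z' (f z'))
  have hinq : ⟪esnoc z' (f z'), w⟫ - t = f z' - f z₀ - f' z₀ (z' - z₀) := by
    rw [hwkey, ht, map_sub]; ring
  have hdp : dist p yq ≤ (2 + 81*K₁^2*K₂)*ε*ρ := by
    calc dist p yq ≤ dist p (esnoc z' (f z')) + dist (esnoc z' (f z')) yq := dist_triangle _ _ _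
      _ ≤ 2*(ε*ρ) + |⟪esnoc z' (f z'), w⟫ - t| := by linarith [hz'd.le, hyqd]
      _ ≤ 2*(ε*ρ) + 81*K₁^2*K₂*ε*ρ := by rw [hinq]; linarith
      _ = (2 + 81*K₁^2*K₂)*ε*ρ := by ring
  rw [Metric.mem_cthickening_iff]
  refine le_trans (EMetric.infEdist_le_edist_of_mem hyqmem) ?_
  rw [edist_dist]
  exact ENNReal.ofReal_le_ofReal hdp
end Plane

section Induction
variable {m : ℕ}

set_option maxHeartbeats 2000000 in
lemma key_induction (α K₁ K₂ : ℝ) (hα : 0 < α) (hK₁ : 0 < K₁) (hK₂ : 0 < K₂)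
    (μ : Measure (EuclideanSpace ℝ (Fin (m + 1))))
    (Cd CF ρ₀ : ℝ) (hCd : 0 < Cd) (hCF : 0 < CF) (hρ₀ : 0 < ρ₀)
    (hdec : AbsDecaying α Cd ρ₀ μ) (hFed : Federer CF ρ₀ μ) (n : ℕ) :
    ∃ C > (0:ℝ), ∀ (S : Set (EuclideanSpace ℝ (Fin m)))
      (f : EuclideanSpace ℝ (Fin m) → ℝ)
      (f' : EuclideanSpace ℝ (Fin m) → (EuclideanSpace ℝ (Fin m) →L[ℝ] ℝ))
      (f'' : EuclideanSpace ℝ (Fin m) →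
        (EuclideanSpace ℝ (Fin m) →L[ℝ] EuclideanSpace ℝ (Fin m) →L[ℝ] ℝ))
      (x : EuclideanSpace ℝ (Fin (m + 1))) (ρ ε : ℝ),
      IsQuasiconvex K₁ S →
      (∀ z ∈ S, HasFDerivWithinAt f (f' z) S z) →
      (∀ z ∈ S, HasFDerivWithinAt f' (f'' z) S z) →
      (∀ z ∈ S, ‖f'' z‖ ≤ (5/6)^n * K₂ / ρ) →
      x ∈ msupp μ → 0 < ρ → ρ * 10^(n+2) ≤ ρ₀ → 0 < ε →
      μ (closedBall x (5*ρ) ∩ cthickening (ε*ρ) (graphOf S f)) ≤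
        ENNReal.ofReal (C * ε ^ (α * (1 - (1/2:ℝ)^n))) * μ (closedBall x ρ) := by
  induction n with
  | zero =>
    refine ⟨CF^3, by positivity, ?_⟩
    intro S f f' f'' x ρ ε hQ hf hf' hM hx hρ hscale hε
    have h100 : (10:ℝ)^(0+2) = 100 := by norm_num
    have h4 : 4*ρ ≤ ρ₀ := by rw [h100] at hscale; nlinarith
    have h58 : closedBall x (5*ρ) ⊆ closedBall x (8*ρ) :=
      closedBall_subset_closedBall (by linarith)
    have hfed := fed_eight hFed hCF hx hρ h4
    have hexp : α * (1 - (1/2:ℝ)^0) = 0 := by norm_num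
    rw [hexp, Real.rpow_zero, mul_one]
    calc μ (closedBall x (5*ρ) ∩ cthickening (ε*ρ) (graphOf S f))
        ≤ μ (closedBall x (8*ρ)) := measure_mono (inter_subset_left.trans h58)
      _ ≤ ENNReal.ofReal (CF^3) * μ (closedBall x ρ) := hfed
  | succ n IH =>
    obtain ⟨C, hC, IH⟩ := IH
    set βn : ℝ := α * (1 - (1/2:ℝ)^n) with hβn
    set βn1 : ℝ := α * (1 - (1/2:ℝ)^(n+1)) with hβn1
    have hβn0 : 0 ≤ βn := by
      have : (1/2:ℝ)^n ≤ 1 := pow_le_one₀ (by norm_num) (by norm_num)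
      have h0 : (0:ℝ) ≤ 1 - (1/2:ℝ)^n := by linarith
      positivity
    have hβnα : βn ≤ α := by
      have : (0:ℝ) ≤ (1/2:ℝ)^n := by positivity
      nlinarith
    have hβn10 : 0 ≤ βn1 := by
      have : (1/2:ℝ)^(n+1) ≤ 1 := pow_le_one₀ (by norm_num) (by norm_num)
      have h0 : (0:ℝ) ≤ 1 - (1/2:ℝ)^(n+1) := by linarith
      positivity
    set c₀ : ℝ := 2 + 81*K₁^2*K₂ with hc₀
    have hc₀0 : 0 < c₀ := by positivity
    set C' : ℝ := CF^3 + Cd * CF^4 * C * (c₀/5)^α * (2:ℝ)^α with hC'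
    have hC'0 : 0 < C' := by positivity
    refine ⟨C', hC'0, ?_⟩
    intro S f f' f'' x ρ ε hQ hf hf' hM hx hρ hscale hε
    have hpow3 : (1000:ℝ) ≤ 10^(n+3) := by
      calc (1000:ℝ) = 10^3 := by norm_num
      _ ≤ 10^(n+3) := pow_le_pow_right₀ (by norm_num) (by omega)
    have hρρ₀ : ρ ≤ ρ₀ := by nlinarith
    have h4 : 4*ρ ≤ ρ₀ := by nlinarith
    have h5 : 5*ρ ≤ ρ₀ := by nlinarith
    have hεβ : (0:ℝ) < ε ^ βn1 := Real.rpow_pos_of_pos hε _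
    by_cases hε1 : ε ≤ 1
    · -- main case
      set r : ℝ := ε ^ (1/2:ℝ) with hr
      have hr0 : 0 < r := Real.rpow_pos_of_pos hε _
      have hrr : r * r = ε := by
        rw [hr, ← Real.rpow_add hε]; norm_num
      have hr1 : r ≤ 1 := Real.rpow_le_one hε.le hε1 (by norm_num)
      have hεr : ε ≤ r := by nlinarith
      have hr2 : r^2 ≤ ε := by nlinarith
      set Γ := graphOf S f with hΓ
      set A := closedBall x (5*ρ) ∩ cthickening (ε*ρ) Γ with hA
      set E := A ∩ msupp μ with hE
      -- Vitali covering
      obtain ⟨u, huE, hdisj, hVit⟩ :=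
        Vitali.exists_disjoint_subfamily_covering_enlargement_closedBall E
          (fun p => p) (fun _ => r*ρ) (r*ρ) (fun _ _ => le_rfl) 5 (by norm_num)
      have hucount : u.Countable := by
        refine Set.PairwiseDisjoint.countable_of_isOpen
          (s := fun p => ball p (r*ρ)) ?_ (fun b _ => isOpen_ball)
          (fun b _ => nonempty_ball.2 (by positivity))
        exact hdisj.mono (fun p => ball_subset_closedBall)
      -- per-ball estimate
      have hperball : ∀ b ∈ u,
          μ (closedBall b (5*(r*ρ)) ∩ cthickening (ε*ρ) Γ) ≤
            ENNReal.ofReal (Cd * CF^3 * ((c₀/5)*r)^α) * μ (closedBall b (r*ρ)) := by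
        intro b hb
        have hbE : b ∈ E := huE hb
        have hbsupp : b ∈ msupp μ := hbE.2
        have hbth : b ∈ cthickening (ε*ρ) Γ := hbE.1.2
        have hM' : ∀ z ∈ S, ‖f'' z‖ ≤ K₂ / ρ := by
          intro z hz
          refine le_trans (hM z hz) ?_
          have h56 : ((5:ℝ)/6)^(n+1) ≤ 1 := pow_le_one₀ (by norm_num) (by norm_num)
          rw [div_le_div_iff_of_pos_right hρ]
          nlinarith
        obtain ⟨w, t, hw, hsub⟩ := graph_near_plane hK₁ hK₂ hQ hf hf' hρ hM'
          hε hεr hr1 hr2 hbth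
        set ε'' : ℝ := c₀*ε/(5*r) with hε''
        have hε''0 : 0 < ε'' := by positivity
        have hmatch : ε''*(5*(r*ρ)) = c₀*ε*ρ := by
          rw [hε'']
          field_simp
        have hdecb := hdec b hbsupp (5*(r*ρ)) (by positivity)
          (by nlinarith) w t hw ε'' hε''0
        rw [hmatch] at hdecb
        have hplane : closedBall b (5*(r*ρ)) ∩ cthickening (ε*ρ) Γ ⊆
            closedBall b (5*(r*ρ)) ∩ cthickening (c₀*ε*ρ) {y | ⟪y, w⟫ = t} := by
          refine subset_inter inter_subset_left ?_
          have h55 : (5:ℝ)*(r*ρ) = 5*r*ρ := by ring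
          rw [h55]
          intro p hp
          exact hsub ⟨hp.1, hp.2⟩
        have hfedb := fed_eight hFed hCF hbsupp (s := r*ρ) (by positivity) (by nlinarith)
        have h58b : closedBall b (5*(r*ρ)) ⊆ closedBall b (8*(r*ρ)) :=
          closedBall_subset_closedBall (by nlinarith)
        have hε''eq : ε'' = (c₀/5)*r := by
          rw [hε'', div_eq_iff (by positivity : (5:ℝ)*r ≠ 0)]
          nlinarith [hrr]
        calc μ (closedBall b (5*(r*ρ)) ∩ cthickening (ε*ρ) Γ)
            ≤ μ (closedBall b (5*(r*ρ)) ∩ cthickening (c₀*ε*ρ) {y | ⟪y, w⟫ = t}) :=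
              measure_mono hplane
          _ ≤ ENNReal.ofReal (Cd * ε''^α) * μ (closedBall b (5*(r*ρ))) := hdecb
          _ ≤ ENNReal.ofReal (Cd * ε''^α) * μ (closedBall b (8*(r*ρ))) :=
              mul_le_mul_right (measure_mono h58b) _
          _ ≤ ENNReal.ofReal (Cd * ε''^α) *
              (ENNReal.ofReal (CF^3) * μ (closedBall b (r*ρ))) :=
              mul_le_mul_right hfedb _
          _ = ENNReal.ofReal (Cd * CF^3 * ((c₀/5)*r)^α) * μ (closedBall b (r*ρ)) := by
              rw [hε''eq, ← mul_assoc, ← ENNReal.ofReal_mul (by positivity)]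
              congr 2
              ring
      -- covering inclusion
      have hcov : E ⊆ ⋃ b ∈ u, (closedBall b (5*(r*ρ)) ∩ cthickening (ε*ρ) Γ) := by
        intro a ha
        obtain ⟨b, hb, hsubb⟩ := hVit a ha
        exact mem_biUnion hb ⟨hsubb (mem_closedBall_self (by positivity)), ha.1.2⟩
      -- the disjoint balls sit in a bigger graph-neighborhood
      have hsmall : ∀ b ∈ u, closedBall b (r*ρ) ⊆
          closedBall x (6*ρ) ∩ cthickening ((ε+r)*ρ) Γ := by
        intro b hb p hp
        have hbE : b ∈ E := huE hb
        have hbx : dist b x ≤ 5*ρ := mem_closedBall.1 hbE.1.1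
        have hpb : dist p b ≤ r*ρ := mem_closedBall.1 hp
        constructor
        · have : dist p x ≤ 6*ρ := by
            calc dist p x ≤ dist p b + dist b x := dist_triangle _ _ _
              _ ≤ r*ρ + 5*ρ := by linarith
              _ ≤ 6*ρ := by nlinarith
          exact mem_closedBall.2 this
        · rw [Metric.mem_cthickening_iff]
          have hbth : b ∈ cthickening (ε*ρ) Γ := hbE.1.2
          rw [Metric.mem_cthickening_iff] at hbth
          calc EMetric.infEdist p Γ ≤ EMetric.infEdist b Γ + edist p b :=
              EMetric.infEdist_le_infEdist_add_edist
            _ ≤ ENNReal.ofReal (ε*ρ) + ENNReal.ofReal (r*ρ) := by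
                refine add_le_add hbth ?_
                rw [edist_dist]
                exact ENNReal.ofReal_le_ofReal hpb
            _ = ENNReal.ofReal ((ε+r)*ρ) := by
                rw [← ENNReal.ofReal_add (by positivity) (by positivity)]
                ring_nf
      -- apply induction hypothesis at scale (6/5)ρ
      set ρ₂ : ℝ := (6/5)*ρ with hρ₂
      set ε₂ : ℝ := (5/6)*(ε+r) with hε₂
      have hIH := IH S f f' f'' x ρ₂ ε₂ hQ hf hf'
        (by
          intro z hz
          refine le_trans (hM z hz) (le_of_eq ?_)
          rw [hρ₂, pow_succ]
          field_simp)
        hx (by positivity)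
        (by
          calc ρ₂ * 10^(n+2) = (6/5)*ρ*10^(n+2) := by rw [hρ₂]
            _ ≤ ρ * 10^(n+3) := by
                have : (10:ℝ)^(n+3) = 10 * 10^(n+2) := by ring
                rw [this]
                nlinarith [pow_pos (show (0:ℝ) < 10 by norm_num) (n+2)]
            _ ≤ ρ₀ := hscale)
        (by positivity)
      have h52 : (5:ℝ)*ρ₂ = 6*ρ := by rw [hρ₂]; ring
      have h22 : ε₂*ρ₂ = (ε+r)*ρ := by rw [hρ₂, hε₂]; ring
      rw [h52, h22] at hIH
      have hρ₂2 : μ (closedBall x ρ₂) ≤ ENNReal.ofReal CF * μ (closedBall x ρ) := by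
        refine le_trans (measure_mono (closedBall_subset_closedBall ?_)) (hFed x hx ρ hρ hρρ₀)
        rw [hρ₂]; linarith
      -- sum up
      have hsum : μ A ≤ ENNReal.ofReal (Cd * CF^3 * ((c₀/5)*r)^α) *
          (ENNReal.ofReal (C * ε₂ ^ βn) * (ENNReal.ofReal CF * μ (closedBall x ρ))) := by
        calc μ A ≤ μ (A ∩ msupp μ) + μ (A \ msupp μ) := measure_le_inter_add_diff μ A _
          _ = μ E := by
              rw [hE]
              have : μ (A \ msupp μ) = 0 :=
                measure_mono_null (diff_subset_compl A (msupp μ)) (msupp_compl_null μ)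
              rw [this, add_zero]
          _ ≤ μ (⋃ b ∈ u, (closedBall b (5*(r*ρ)) ∩ cthickening (ε*ρ) Γ)) :=
              measure_mono hcov
          _ ≤ ∑' b : u, μ (closedBall (b:EuclideanSpace ℝ (Fin (m+1))) (5*(r*ρ))
              ∩ cthickening (ε*ρ) Γ) := measure_biUnion_le μ hucount _
          _ ≤ ∑' b : u, ENNReal.ofReal (Cd * CF^3 * ((c₀/5)*r)^α) *
              μ (closedBall (b:EuclideanSpace ℝ (Fin (m+1))) (r*ρ)) :=
              ENNReal.tsum_le_tsum (fun b => hperball b b.2)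
          _ = ENNReal.ofReal (Cd * CF^3 * ((c₀/5)*r)^α) *
              ∑' b : u, μ (closedBall (b:EuclideanSpace ℝ (Fin (m+1))) (r*ρ)) :=
              ENNReal.tsum_mul_left
          _ = ENNReal.ofReal (Cd * CF^3 * ((c₀/5)*r)^α) *
              μ (⋃ b ∈ u, closedBall b (r*ρ)) := by
              rw [measure_biUnion hucount hdisj (fun b _ => measurableSet_closedBall)]
          _ ≤ ENNReal.ofReal (Cd * CF^3 * ((c₀/5)*r)^α) *
              μ (closedBall x (6*ρ) ∩ cthickening ((ε+r)*ρ) Γ) := by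
              refine mul_le_mul_right (measure_mono ?_) _
              exact iUnion₂_subset hsmall
          _ ≤ ENNReal.ofReal (Cd * CF^3 * ((c₀/5)*r)^α) *
              (ENNReal.ofReal (C * ε₂ ^ βn) * μ (closedBall x ρ₂)) :=
              mul_le_mul_right hIH _
          _ ≤ _ := mul_le_mul_right (mul_le_mul_right hρ₂2 _) _
      -- final real-number estimate
      have hreal : Cd * CF^3 * ((c₀/5)*r)^α * (C * ε₂ ^ βn) * CF ≤ C' * ε ^ βn1 := by
        have hε₂0 : 0 ≤ ε₂ := by positivity
        have hε₂2r : ε₂ ≤ 2*r := by rw [hε₂]; nlinarith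
        have h1 : ε₂ ^ βn ≤ (2*r) ^ βn := Real.rpow_le_rpow hε₂0 hε₂2r hβn0
        have h2 : ((2:ℝ)*r) ^ βn = 2^βn * r^βn := Real.mul_rpow (by norm_num) hr0.le
        have h3 : ((c₀/5)*r)^α = (c₀/5)^α * r^α := Real.mul_rpow (by positivity) hr0.le
        have h4' : (2:ℝ)^βn ≤ (2:ℝ)^α := Real.rpow_le_rpow_of_exponent_le one_le_two hβnα
        have h5' : r^α * r^βn = r^(α+βn) := (Real.rpow_add hr0 _ _).symm
        have h6 : r^(α+βn) = ε ^ βn1 := by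
          rw [hr, ← Real.rpow_mul hε.le]
          congr 1
          rw [hβn1, hβn]
          have : (1/2:ℝ)^(n+1) = (1/2)^n * (1/2) := by ring
          rw [this]
          ring
        have hr0β : (0:ℝ) ≤ r ^ βn := Real.rpow_nonneg hr0.le _
        set X : ℝ := Cd * CF^4 * C * (c₀/5)^α with hX
        have hX0 : (0:ℝ) ≤ X := by positivity
        have h1' : ε₂^βn ≤ 2^α * r^βn := by
          calc ε₂^βn ≤ (2*r)^βn := h1
            _ = 2^βn * r^βn := h2
            _ ≤ 2^α * r^βn := mul_le_mul_of_nonneg_right h4' hr0β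
        have hXC' : X * 2^α ≤ C' := by
          rw [hC', hX]
          have : (0:ℝ) < CF^3 := by positivity
          linarith
        calc Cd * CF^3 * ((c₀/5)*r)^α * (C * ε₂ ^ βn) * CF
            = X * r^α * ε₂^βn := by rw [h3, hX]; ring
          _ ≤ X * r^α * (2^α * r^βn) := by
              refine mul_le_mul_of_nonneg_left h1' ?_
              have : (0:ℝ) ≤ r^α := Real.rpow_nonneg hr0.le _
              positivity
          _ = (X * 2^α) * (r^α * r^βn) := by ring
          _ = (X * 2^α) * ε^βn1 := by rw [h5', h6]
          _ ≤ C' * ε^βn1 := mul_le_mul_of_nonneg_right hXC' (Real.rpow_nonneg hε.le _)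
      refine le_trans hsum ?_
      have : ENNReal.ofReal (Cd * CF^3 * ((c₀/5)*r)^α) *
          (ENNReal.ofReal (C * ε₂ ^ βn) * (ENNReal.ofReal CF * μ (closedBall x ρ)))
          = ENNReal.ofReal (Cd * CF^3 * ((c₀/5)*r)^α * (C * ε₂ ^ βn) * CF) *
            μ (closedBall x ρ) := by
        have hsplit : ENNReal.ofReal (Cd * CF^3 * ((c₀/5)*r)^α * (C * ε₂ ^ βn) * CF)
            = ENNReal.ofReal (Cd * CF^3 * ((c₀/5)*r)^α) * ENNReal.ofReal (C * ε₂ ^ βn) *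
              ENNReal.ofReal CF := by
          rw [ENNReal.ofReal_mul (by positivity), ENNReal.ofReal_mul (by positivity)]
        rw [hsplit]
        ring
      rw [this]
      exact mul_le_mul_left (ENNReal.ofReal_le_ofReal hreal) _
    · -- trivial case ε > 1
      push_neg at hε1
      have h58 : closedBall x (5*ρ) ⊆ closedBall x (8*ρ) :=
        closedBall_subset_closedBall (by linarith)
      have hfed := fed_eight hFed hCF hx hρ h4
      have hone : (1:ℝ) ≤ ε ^ βn1 := Real.one_le_rpow hε1.le hβn10
      calc μ (closedBall x (5*ρ) ∩ cthickening (ε*ρ) (graphOf S f))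
          ≤ μ (closedBall x (8*ρ)) := measure_mono (inter_subset_left.trans h58)
        _ ≤ ENNReal.ofReal (CF^3) * μ (closedBall x ρ) := hfed
        _ ≤ ENNReal.ofReal (C' * ε ^ βn1) * μ (closedBall x ρ) := by
            refine mul_le_mul_left (ENNReal.ofReal_le_ofReal ?_) _
            have hX0 : (0:ℝ) ≤ Cd * CF^4 * C * (c₀/5)^α * (2:ℝ)^α := by positivity
            have h1 : CF^3 ≤ C' := by rw [hC']; linarith
            calc CF^3 = CF^3 * 1 := by ring
              _ ≤ C' * ε ^ βn1 := by
                  refine mul_le_mul h1 hone zero_le_one ?_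
                  have : (0:ℝ) < CF^3 := by positivity
                  linarith
end Induction

set_option maxHeartbeats 2000000 in
/-- Power decay for neighborhoods of graphs: if `μ` is absolutely `α`-friendly
(absolutely `α`-decaying and Federer) and compactly supported, `S` is
`K₁`-quasiconvex, `‖f''‖_S ≤ K₂/ρ`, and `β < α`, then for every ball `B = B(x,ρ)`
centered on the support and every `ε > 0`,
`μ(B ∩ Γ^{(ερ)}) ≤ C ε^β μ(B)` with `C = C(K₁,K₂,μ,β)`. -/
theorem graph_neighborhood_power_decay (α β K₁ K₂ : ℝ) (hα : 0 < α) (hβ : β < α)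
    (hβ0 : 0 < β) (hK₁ : 0 < K₁) (hK₂ : 0 < K₂)
    (μ : Measure (EuclideanSpace ℝ (Fin (m + 1))))
    (Cd CF ρ₀ : ℝ) (hCd : 0 < Cd) (hCF : 0 < CF) (hρ₀ : 0 < ρ₀)
    (hdec : AbsDecaying α Cd ρ₀ μ) (hFed : Federer CF ρ₀ μ)
    (hcpt : IsCompact (msupp μ)) :
    ∃ C > (0 : ℝ), ∀ (S : Set (EuclideanSpace ℝ (Fin m)))
      (f : EuclideanSpace ℝ (Fin m) → ℝ)
      (f' : EuclideanSpace ℝ (Fin m) → (EuclideanSpace ℝ (Fin m) →L[ℝ] ℝ))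
      (f'' : EuclideanSpace ℝ (Fin m) →
        (EuclideanSpace ℝ (Fin m) →L[ℝ] EuclideanSpace ℝ (Fin m) →L[ℝ] ℝ))
      (x : EuclideanSpace ℝ (Fin (m + 1))) (ρ ε : ℝ),
      IsQuasiconvex K₁ S →
      (∀ z ∈ S, HasFDerivWithinAt f (f' z) S z) →
      (∀ z ∈ S, HasFDerivWithinAt f' (f'' z) S z) →
      (∀ z ∈ S, ‖f'' z‖ ≤ K₂ / ρ) →
      x ∈ msupp μ → 0 < ρ → ρ ≤ ρ₀ → 0 < ε →
      μ (closedBall x ρ ∩ cthickening (ε * ρ) (graphOf S f)) ≤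
        ENNReal.ofReal (C * ε ^ β) * μ (closedBall x ρ) := by
  -- choose n so that the n-th exponent dominates β
  obtain ⟨n, hn⟩ : ∃ n : ℕ, ((1:ℝ)/2)^n < (α - β)/α := by
    refine exists_pow_lt_of_lt_one (div_pos (by linarith) hα) (by norm_num)
  have hβle : β ≤ α * (1 - (1/2:ℝ)^n) := by
    have h1 : α * ((α - β)/α) = α - β := by field_simp
    nlinarith
  obtain ⟨Cn, hCn, hQn⟩ := key_induction α K₁ K₂ hα hK₁ hK₂ μ Cd CF ρ₀ hCd hCF hρ₀ hdec hFed n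
  set βn : ℝ := α * (1 - (1/2:ℝ)^n) with hβn
  have hβnα : βn ≤ α := by
    have : (0:ℝ) ≤ (1/2:ℝ)^n := by positivity
    nlinarith
  set P : ℝ := (10:ℝ)^(n+2) with hP
  have hP1 : (1:ℝ) ≤ P := one_le_pow₀ (by norm_num)
  have hP0 : (0:ℝ) < P := by positivity
  set C : ℝ := 1 + Cn * P^α * CF with hC
  have hPα : (0:ℝ) < P^α := Real.rpow_pos_of_pos hP0 _
  have hC0 : 0 < C := by positivity
  have hCP : (0:ℝ) ≤ Cn * P^α * CF := by positivity
  have hC1 : 1 ≤ C := by rw [hC]; linarith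
  refine ⟨C, hC0, ?_⟩
  intro S f f' f'' x ρ ε hQ hf hf' hM hx hρ hρρ₀ hε
  by_cases hε1 : ε ≤ 1
  · -- covering at scale ρ' = ρ / P
    set ρ' : ℝ := ρ / P with hρ'
    have hρ'0 : 0 < ρ' := by positivity
    have hρ'ρ : ρ' ≤ ρ := by
      rw [hρ', div_le_iff₀ hP0]; nlinarith
    set Γ := graphOf S f with hΓ
    set A := closedBall x ρ ∩ cthickening (ε*ρ) Γ with hA
    set E := A ∩ msupp μ with hE
    obtain ⟨u, huE, hdisj, hVit⟩ :=
      Vitali.exists_disjoint_subfamily_covering_enlargement_closedBall E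
        (fun p => p) (fun _ => ρ') ρ' (fun _ _ => le_rfl) 5 (by norm_num)
    have hucount : u.Countable := by
      refine Set.PairwiseDisjoint.countable_of_isOpen
        (s := fun p => ball p ρ') ?_ (fun b _ => isOpen_ball)
        (fun b _ => nonempty_ball.2 hρ'0)
      exact hdisj.mono (fun p => ball_subset_closedBall)
    set ε' : ℝ := P * ε with hε'
    have hε'0 : 0 < ε' := by positivity
    have hmatch : ε' * ρ' = ε * ρ := by
      rw [hε', hρ']; field_simp
    have hperball : ∀ b ∈ u,
        μ (closedBall b (5*ρ') ∩ cthickening (ε*ρ) Γ) ≤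
          ENNReal.ofReal (Cn * ε' ^ βn) * μ (closedBall b ρ') := by
      intro b hb
      have hbE : b ∈ E := huE hb
      have hM' : ∀ z ∈ S, ‖f'' z‖ ≤ (5/6)^n * K₂ / ρ' := by
        intro z hz
        refine le_trans (hM z hz) ?_
        have hkey : (1:ℝ) ≤ (5/6)^n * P := by
          have h1 : ((5:ℝ)/6)^n * P = ((5:ℝ)/6*10)^n * 100 := by
            rw [hP, pow_add, ← mul_assoc, ← mul_pow]; norm_num
          have h2 : (1:ℝ) ≤ ((5:ℝ)/6*10)^n := one_le_pow₀ (by norm_num)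
          nlinarith
        have hρ'eq : (5/6:ℝ)^n * K₂ / ρ' = ((5/6)^n * P) * (K₂/ρ) := by
          rw [hρ']; field_simp
        rw [hρ'eq]
        have h0 : (0:ℝ) ≤ K₂/ρ := by positivity
        nlinarith
      have hscale' : ρ' * 10^(n+2) ≤ ρ₀ := by
        rw [hρ', hP]; field_simp
        exact hρρ₀
      have := hQn S f f' f'' b ρ' ε' hQ hf hf' hM' hbE.2 hρ'0 hscale' hε'0
      rwa [hmatch] at this
    have hcov : E ⊆ ⋃ b ∈ u, (closedBall b (5*ρ') ∩ cthickening (ε*ρ) Γ) := by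
      intro a ha
      obtain ⟨b, hb, hsubb⟩ := hVit a ha
      have h5 : (5:ℝ)*ρ' = 5*ρ' := rfl
      exact mem_biUnion hb ⟨hsubb (mem_closedBall_self hρ'0.le), ha.1.2⟩
    have hsmall : ∀ b ∈ u, closedBall b ρ' ⊆ closedBall x (2*ρ) := by
      intro b hb p hp
      have hbx : dist b x ≤ ρ := mem_closedBall.1 (huE hb).1.1
      have hpb : dist p b ≤ ρ' := mem_closedBall.1 hp
      have : dist p x ≤ 2*ρ := by
        calc dist p x ≤ dist p b + dist b x := dist_triangle _ _ _
          _ ≤ ρ' + ρ := by linarith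
          _ ≤ 2*ρ := by linarith
      exact mem_closedBall.2 this
    have hsum : μ A ≤ ENNReal.ofReal (Cn * ε' ^ βn) *
        (ENNReal.ofReal CF * μ (closedBall x ρ)) := by
      calc μ A ≤ μ (A ∩ msupp μ) + μ (A \ msupp μ) := measure_le_inter_add_diff μ A _
        _ = μ E := by
            rw [hE]
            have : μ (A \ msupp μ) = 0 :=
              measure_mono_null (diff_subset_compl A (msupp μ)) (msupp_compl_null μ)
            rw [this, add_zero]
        _ ≤ μ (⋃ b ∈ u, (closedBall b (5*ρ') ∩ cthickening (ε*ρ) Γ)) :=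
            measure_mono hcov
        _ ≤ ∑' b : u, μ (closedBall (b:EuclideanSpace ℝ (Fin (m+1))) (5*ρ')
            ∩ cthickening (ε*ρ) Γ) := measure_biUnion_le μ hucount _
        _ ≤ ∑' b : u, ENNReal.ofReal (Cn * ε' ^ βn) *
            μ (closedBall (b:EuclideanSpace ℝ (Fin (m+1))) ρ') :=
            ENNReal.tsum_le_tsum (fun b => hperball b b.2)
        _ = ENNReal.ofReal (Cn * ε' ^ βn) *
            ∑' b : u, μ (closedBall (b:EuclideanSpace ℝ (Fin (m+1))) ρ') :=
            ENNReal.tsum_mul_left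
        _ = ENNReal.ofReal (Cn * ε' ^ βn) * μ (⋃ b ∈ u, closedBall b ρ') := by
            rw [measure_biUnion hucount hdisj (fun b _ => measurableSet_closedBall)]
        _ ≤ ENNReal.ofReal (Cn * ε' ^ βn) * μ (closedBall x (2*ρ)) :=
            mul_le_mul_right (measure_mono (iUnion₂_subset hsmall)) _
        _ ≤ _ := mul_le_mul_right (hFed x hx ρ hρ hρρ₀) _
    have hreal : Cn * ε' ^ βn * CF ≤ C * ε ^ β := by
      have h1 : ε' ^ βn = P^βn * ε^βn := Real.mul_rpow hP0.le hε.le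
      have h2 : P^βn ≤ P^α := Real.rpow_le_rpow_of_exponent_le hP1 hβnα
      have h3 : ε^βn ≤ ε^β := Real.rpow_le_rpow_of_exponent_ge hε hε1 hβle
      have hεβn : (0:ℝ) < ε^βn := Real.rpow_pos_of_pos hε _
      have hεβ : (0:ℝ) < ε^β := Real.rpow_pos_of_pos hε _
      have h12 : P^βn * ε^βn ≤ P^α * ε^β := mul_le_mul h2 h3 hεβn.le hPα.le
      calc Cn * ε' ^ βn * CF = Cn * CF * (P^βn * ε^βn) := by rw [h1]; ring
        _ ≤ Cn * CF * (P^α * ε^β) := mul_le_mul_of_nonneg_left h12 (by positivity)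
        _ = (Cn * P^α * CF) * ε^β := by ring
        _ ≤ C * ε^β := by
            refine mul_le_mul_of_nonneg_right ?_ hεβ.le
            rw [hC]; linarith
    refine le_trans hsum ?_
    have heq : ENNReal.ofReal (Cn * ε' ^ βn) * (ENNReal.ofReal CF * μ (closedBall x ρ))
        = ENNReal.ofReal (Cn * ε' ^ βn * CF) * μ (closedBall x ρ) := by
      have hsplit : ENNReal.ofReal (Cn * ε' ^ βn * CF)
          = ENNReal.ofReal (Cn * ε' ^ βn) * ENNReal.ofReal CF :=
        ENNReal.ofReal_mul (by positivity)
      rw [hsplit]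
      ring
    rw [heq]
    exact mul_le_mul_left (ENNReal.ofReal_le_ofReal hreal) _
  · push_neg at hε1
    refine le_trans (measure_mono inter_subset_left) ?_
    refine le_mul_of_one_le_left' ?_
    rw [ENNReal.one_le_ofReal]
    have hεβ : (1:ℝ) ≤ ε ^ β := Real.one_le_rpow hε1.le hβ0.le
    nlinarith
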